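/- Let X be a compact Hausdorff space and B the set of pairs (O, K) with O open, K compact, and O ⊆ K, with operations (O₀,K₀)∨(O₁,K₁)=(O₀∪O₁, K₀∪K₁), (O₀,K₀)∧(O₁,K₁)=(O₀∩O₁, K₀∩K₁), involution (O,K)'=(X∖K, X∖O), 0=(∅,∅), 1=(X,X), and relation (O₀,K₀) ≺ (O₁,K₁) iff K₀ ⊆ O₁. Then B is a spil. -/

import Mathlib

/-- A strong proximity involution lattice (spil), stated unbundled:
`sup`, `inf` a bounded distributive lattice structure, `inv` an involution,
`prec` the proximity relation. Finite joins/meets are via list folds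
(empty join is `bot`, empty meet is `top`). -/
structure IsSpil {B : Type*} (sup inf : B → B → B) (inv : B → B) (bot top : B)
    (prec : B → B → Prop) : Prop where
  sup_comm : ∀ a b, sup a b = sup b a
  sup_assoc : ∀ a b c, sup (sup a b) c = sup a (sup b c)
  inf_comm : ∀ a b, inf a b = inf b a
  inf_assoc : ∀ a b c, inf (inf a b) c = inf a (inf b c)
  sup_inf_absorb : ∀ a b, sup a (inf a b) = a
  inf_sup_absorb : ∀ a b, inf a (sup a b) = a
  inf_sup_distrib : ∀ a b c, inf a (sup b c) = sup (inf a b) (inf a c)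
  bot_sup : ∀ a, sup bot a = a
  top_inf : ∀ a, inf top a = a
  prec_trans : ∀ a b c, prec a b → prec b c → prec a c
  prec_interpolate : ∀ a c, prec a c → ∃ b, prec a b ∧ prec b c
  join_prec : ∀ (M : List B) (a : B), (∀ m ∈ M, prec m a) ↔ prec (M.foldr sup bot) a
  prec_meet : ∀ (M : List B) (a : B), (∀ m ∈ M, prec a m) ↔ prec a (M.foldr inf top)
  inv_inv : ∀ x, inv (inv x) = x
  exchange : ∀ x y z, prec (inf x y) z ↔ prec x (sup z (inv y))
  inv_sup : ∀ x y, inv (sup x y) = inf (inv x) (inv y)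
  inv_inf : ∀ x y, inv (inf x y) = sup (inv x) (inv y)
  prec_bot : ∀ x y, prec x (inf y (inv y)) → prec x bot

/-- Pairs `(O, K)` with `O` open, `K` compact and `O ⊆ K`. -/
def OKPair (X : Type*) [TopologicalSpace X] : Type _ :=
  {s : Set X × Set X // IsOpen s.1 ∧ IsCompact s.2 ∧ s.1 ⊆ s.2}

variable {X : Type*} [TopologicalSpace X] [CompactSpace X] [T2Space X]

def okSup (p q : OKPair X) : OKPair X :=
  ⟨(p.1.1 ∪ q.1.1, p.1.2 ∪ q.1.2), p.2.1.union q.2.1, p.2.2.1.union q.2.2.1,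
    Set.union_subset_union p.2.2.2 q.2.2.2⟩

def okInf (p q : OKPair X) : OKPair X :=
  ⟨(p.1.1 ∩ q.1.1, p.1.2 ∩ q.1.2), p.2.1.inter q.2.1, p.2.2.1.inter q.2.2.1,
    Set.inter_subset_inter p.2.2.2 q.2.2.2⟩

def okInv (p : OKPair X) : OKPair X :=
  ⟨(p.1.2ᶜ, p.1.1ᶜ), p.2.2.1.isClosed.isOpen_compl,
    p.2.1.isClosed_compl.isCompact, Set.compl_subset_compl.2 p.2.2.2⟩

def okBot : OKPair X := ⟨(∅, ∅), isOpen_empty, isCompact_empty, subset_rfl⟩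

def okTop : OKPair X := ⟨(Set.univ, Set.univ), isOpen_univ, isCompact_univ, subset_rfl⟩

def okPrec (p q : OKPair X) : Prop := p.1.2 ⊆ q.1.1

theorem stmt16 :
    IsSpil (okSup (X := X)) okInf okInv okBot okTop okPrec := by
  have ext : ∀ p q : OKPair X, p.1.1 = q.1.1 → p.1.2 = q.1.2 → p = q := by
    intro p q h1 h2
    exact Subtype.ext (Prod.ext h1 h2)
  constructor
  · intro a b; exact ext _ _ (Set.union_comm _ _) (Set.union_comm _ _)
  · intro a b c; exact ext _ _ (Set.union_assoc _ _ _) (Set.union_assoc _ _ _)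
  · intro a b; exact ext _ _ (Set.inter_comm _ _) (Set.inter_comm _ _)
  · intro a b c; exact ext _ _ (Set.inter_assoc _ _ _) (Set.inter_assoc _ _ _)
  · intro a b; exact ext _ _ sup_inf_self sup_inf_self
  · intro a b; exact ext _ _ inf_sup_self inf_sup_self
  · intro a b c
    exact ext _ _ (Set.inter_union_distrib_left _ _ _) (Set.inter_union_distrib_left _ _ _)
  · intro a; exact ext _ _ (Set.empty_union _) (Set.empty_union _)
  · intro a; exact ext _ _ (Set.univ_inter _) (Set.univ_inter _)
  · intro a b c hab hbc
    exact hab.trans (b.2.2.2.trans hbc)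
  · intro a c h
    obtain ⟨L, hL, haL, hLc⟩ := exists_compact_between a.2.2.1 c.2.1 h
    exact ⟨⟨(interior L, L), isOpen_interior, hL, interior_subset⟩, haL, hLc⟩
  · intro M a
    induction M with
    | nil => exact ⟨fun _ => Set.empty_subset _, fun _ m hm => by simp at hm⟩
    | cons x M ih =>
      simp only [List.mem_cons, List.foldr_cons]
      constructor
      · rintro h
        exact Set.union_subset (h x (Or.inl rfl)) ((ih.mp fun m hm => h m (Or.inr hm)))
      · rintro h m (rfl | hm)
        · exact (Set.union_subset_iff.mp h).1
        · exact ih.mpr (Set.union_subset_iff.mp h).2 m hm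
  · intro M a
    induction M with
    | nil => exact ⟨fun _ => Set.subset_univ _, fun _ m hm => by simp at hm⟩
    | cons x M ih =>
      simp only [List.mem_cons, List.foldr_cons]
      constructor
      · rintro h
        exact Set.subset_inter (h x (Or.inl rfl)) (ih.mp fun m hm => h m (Or.inr hm))
      · rintro h m (rfl | hm)
        · exact (Set.subset_inter_iff.mp h).1
        · exact ih.mpr (Set.subset_inter_iff.mp h).2 m hm
  · intro x; exact ext _ _ (compl_compl _) (compl_compl _)
  · intro x y z
    show x.1.2 ∩ y.1.2 ⊆ z.1.1 ↔ x.1.2 ⊆ z.1.1 ∪ y.1.2ᶜ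
    constructor
    · intro h t ht
      by_cases hy : t ∈ y.1.2
      · exact Or.inl (h ⟨ht, hy⟩)
      · exact Or.inr hy
    · rintro h t ⟨ht, hy⟩
      rcases h ht with h' | h'
      · exact h'
      · exact absurd hy h'
  · intro x y; exact ext _ _ (Set.compl_union _ _) (Set.compl_union _ _)
  · intro x y; exact ext _ _ (Set.compl_inter _ _) (Set.compl_inter _ _)
  · intro x y h
    intro t ht
    rcases h ht with ⟨h1, h2⟩
    exact absurd (y.2.2.2 h1) h2
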